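/- Let 1 < α < 2. There exists a constant C > 0 depending only on α such that for all a ∈ ℤ, all l ∈ ℝ, all r ≥ 1/100, and all real M₁, M₂ ≥ 1/2: #{k ∈ ℤ : M₁ ≤ |k| ≤ 2M₁, M₂ ≤ |a − k| ≤ 2M₂, and | |k|^α + |a−k|^α − l | ≤ r} ≤ C (min{M₁, M₂})^{1−α/2} r^{1/2}. The constant C is independent of a, l, r, M₁ and M₂. -/

import Mathlib

open Set Real

lemma powLin_hasDerivAt (α b c x : ℝ) (h : b * x + c ≠ 0) :
    HasDerivAt (fun t => (b * t + c) ^ α) (b * α * (b * x + c) ^ (α - 1)) x := by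
  have h1 : HasDerivAt (fun t : ℝ => b * t + c) b x := by
    simpa using ((hasDerivAt_id x).const_mul b).add_const c
  exact h1.rpow_const (Or.inl h)

lemma aux_conv (α b₁ c₁ b₂ c₂ lam p q : ℝ) (hα₁ : 1 < α) (hα₂ : α < 2)
    (h₁ : ∀ x ∈ Set.Icc p q, 0 < b₁ * x + c₁) (h₂ : ∀ x ∈ Set.Icc p q, 0 < b₂ * x + c₂)
    (hlam : ∀ x ∈ Set.Icc p q,
      lam ≤ α * (α - 1) * (b₁ ^ 2 * (b₁ * x + c₁) ^ (α - 2) + b₂ ^ 2 * (b₂ * x + c₂) ^ (α - 2))) :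
    ConvexOn ℝ (Set.Icc p q)
      (fun x => (b₁ * x + c₁) ^ α + (b₂ * x + c₂) ^ α - lam / 2 * x ^ 2) := by
  set f : ℝ → ℝ := fun x => (b₁ * x + c₁) ^ α + (b₂ * x + c₂) ^ α - lam / 2 * x ^ 2 with hf
  set f' : ℝ → ℝ := fun x => b₁ * α * (b₁ * x + c₁) ^ (α - 1) + b₂ * α * (b₂ * x + c₂) ^ (α - 1)
      - lam * x with hf'
  have key : ∀ x ∈ Set.Icc p q, HasDerivAt f (f' x) x := by
    intro x hx
    have q1 := powLin_hasDerivAt α b₁ c₁ x (h₁ x hx).ne'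
    have q2 := powLin_hasDerivAt α b₂ c₂ x (h₂ x hx).ne'
    have q3 : HasDerivAt (fun t : ℝ => lam / 2 * t ^ 2) (lam * x) x := by
      have := (hasDerivAt_pow 2 x).const_mul (lam / 2)
      refine this.congr_deriv ?_
      norm_num
      ring
    exact (q1.add q2).sub q3
  have key' : ∀ x ∈ Set.Icc p q, HasDerivAt f' (α * (α - 1) *
      (b₁ ^ 2 * (b₁ * x + c₁) ^ (α - 2) + b₂ ^ 2 * (b₂ * x + c₂) ^ (α - 2)) - lam) x := by
    intro x hx
    have q1 := (powLin_hasDerivAt (α - 1) b₁ c₁ x (h₁ x hx).ne').const_mul (b₁ * α)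
    have q2 := (powLin_hasDerivAt (α - 1) b₂ c₂ x (h₂ x hx).ne').const_mul (b₂ * α)
    have q3 : HasDerivAt (fun t : ℝ => lam * t) lam x := by
      simpa using (hasDerivAt_id x).const_mul lam
    have := (q1.add q2).sub q3
    refine this.congr_deriv ?_
    have e1 : α - 1 - 1 = α - 2 := by ring
    rw [e1]
    ring
  apply convexOn_of_deriv2_nonneg (convex_Icc p q)
  · intro x hx
    exact (key x hx).continuousAt.continuousWithinAt
  · intro x hx
    rw [interior_Icc] at hx
    exact (key x (Ioo_subset_Icc_self hx)).differentiableAt.differentiableWithinAt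
  · intro x hx
    rw [interior_Icc] at hx
    have hev : deriv f =ᶠ[nhds x] f' := by
      filter_upwards [Ioo_mem_nhds hx.1 hx.2] with t ht
      exact (key t (Ioo_subset_Icc_self ht)).deriv
    exact ((key' x (Ioo_subset_Icc_self hx)).differentiableAt.congr_of_eventuallyEq
      hev).differentiableWithinAt
  · intro x hx
    rw [interior_Icc] at hx
    have hev : deriv f =ᶠ[nhds x] f' := by
      filter_upwards [Ioo_mem_nhds hx.1 hx.2] with t ht
      exact (key t (Ioo_subset_Icc_self ht)).deriv
    have : deriv (deriv f) x = deriv f' x := hev.deriv_eq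
    rw [Function.iterate_succ, Function.iterate_one, Function.comp_apply, this,
      (key' x (Ioo_subset_Icc_self hx)).deriv]
    have := hlam x (Ioo_subset_Icc_self hx)
    linarith
open Set Real

lemma three_point (f : ℝ → ℝ) (lam p q x y z l r : ℝ)
    (hcv : ConvexOn ℝ (Set.Icc p q) (fun t => f t - lam / 2 * t ^ 2))
    (hx : x ∈ Set.Icc p q) (hz : z ∈ Set.Icc p q) (hxy : x ≤ y) (hyz : y ≤ z)
    (hfx : |f x - l| ≤ r) (hfy : |f y - l| ≤ r) (hfz : |f z - l| ≤ r) :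
    lam * ((y - x) * (z - y)) ≤ 4 * r := by
  have hr : 0 ≤ r := le_trans (abs_nonneg _) hfx
  rcases eq_or_lt_of_le (hxy.trans hyz) with heq | hlt
  · have h1 : y = x := le_antisymm (by rw [heq]; exact hyz) hxy
    have h0 : lam * ((y - x) * (z - y)) = 0 := by rw [h1, ← heq]; ring
    rw [h0]; linarith
  · set t : ℝ := (z - y) / (z - x) with ht
    have hzx : 0 < z - x := by linarith
    have ht0 : 0 ≤ t := div_nonneg (by linarith) hzx.le
    have ht1 : t ≤ 1 := (div_le_one hzx).mpr (by linarith)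
    have hne : z - x ≠ 0 := hzx.ne'
    have hyId : t * x + (1 - t) * z = y := by rw [ht]; field_simp; ring
    have hc := hcv.2 hx hz ht0 (show (0:ℝ) ≤ 1 - t by linarith) (by ring)
    simp only [smul_eq_mul, hyId] at hc
    rw [abs_le] at hfx hfy hfz
    have hb1 : t * (f x - lam / 2 * x ^ 2) ≤ t * ((l + r) - lam / 2 * x ^ 2) :=
      mul_le_mul_of_nonneg_left (by linarith [hfx.2]) ht0
    have hb2 : (1 - t) * (f z - lam / 2 * z ^ 2) ≤ (1 - t) * ((l + r) - lam / 2 * z ^ 2) :=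
      mul_le_mul_of_nonneg_left (by linarith [hfz.2]) (by linarith)
    have hid2 : lam / 2 * (t * x ^ 2 + (1 - t) * z ^ 2 - y ^ 2)
        = lam / 2 * ((y - x) * (z - y)) := by rw [← hyId]; ring
    linarith [hfy.1, hb1, hb2, hc, hid2]

lemma countC (T : Set ℤ) (hfin : T.Finite) (R : ℝ) (hR : 0 ≤ R)
    (h : ∀ x ∈ T, ∀ y ∈ T, ∀ z ∈ T, x ≤ y → y ≤ z →
      ((y - x : ℤ) : ℝ) * ((z - y : ℤ) : ℝ) ≤ R ^ 2) :
    (T.ncard : ℝ) ≤ 2 * R + 2 := by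
  rcases T.eq_empty_or_nonempty with rfl | hne
  · simp; linarith
  · classical
    set F := hfin.toFinset with hF
    have hFne : F.Nonempty := by
      rwa [hF, Set.Finite.toFinset_nonempty]
    set m := F.min' hFne
    set M := F.max' hFne
    have hmem : ∀ k, k ∈ F ↔ k ∈ T := fun k => hfin.mem_toFinset
    have hsub : F ⊆ Finset.Icc m (m + ⌊R⌋) ∪ Finset.Icc (M - ⌊R⌋) M := by
      intro k hk
      by_contra hcon
      simp only [Finset.mem_union, Finset.mem_Icc, not_or, not_and_or, not_le] at hcon
      have hmk : m ≤ k := F.min'_le k hk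
      have hkM : k ≤ M := F.le_max' k hk
      have h1 : m + ⌊R⌋ < k := by
        rcases hcon.1 with h | h
        · exact absurd hmk (not_le.mpr h)
        · exact h
      have h2 : k < M - ⌊R⌋ := by
        rcases hcon.2 with h | h
        · exact h
        · exact absurd hkM (not_le.mpr h)
      have hprod := h m ((hmem m).mp (F.min'_mem hFne)) k ((hmem k).mp hk) M
        ((hmem M).mp (F.max'_mem hFne)) hmk hkM
      have hRf : R < ((k - m : ℤ) : ℝ) := by
        have : ⌊R⌋ + 1 ≤ k - m := by omega
        calc R < (⌊R⌋ : ℝ) + 1 := Int.lt_floor_add_one R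
        _ ≤ ((k - m : ℤ) : ℝ) := by exact_mod_cast Int.cast_le.mpr this
      have hRf2 : R < ((M - k : ℤ) : ℝ) := by
        have : ⌊R⌋ + 1 ≤ M - k := by omega
        calc R < (⌊R⌋ : ℝ) + 1 := Int.lt_floor_add_one R
        _ ≤ ((M - k : ℤ) : ℝ) := by exact_mod_cast Int.cast_le.mpr this
      nlinarith
    have hcard : T.ncard = F.card := Set.ncard_eq_toFinset_card T hfin
    have hc2 := Finset.card_le_card hsub
    have hc3 := (Finset.card_union_le (Finset.Icc m (m + ⌊R⌋)) (Finset.Icc (M - ⌊R⌋) M))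
    have hRnn : (0:ℤ) ≤ ⌊R⌋ := Int.floor_nonneg.mpr hR
    have hic1 : (Finset.Icc m (m + ⌊R⌋)).card = (⌊R⌋ + 1).toNat := by
      rw [Int.card_Icc]; congr 1; omega
    have hic2 : (Finset.Icc (M - ⌊R⌋) M).card = (⌊R⌋ + 1).toNat := by
      rw [Int.card_Icc]; congr 1; omega
    have hfl : ((⌊R⌋ + 1).toNat : ℝ) ≤ R + 1 := by
      have h1 : (((⌊R⌋ + 1).toNat : ℤ) : ℝ) = ((⌊R⌋ : ℝ) + 1) := by
        rw [Int.toNat_of_nonneg (by omega)]; push_cast; ring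
      push_cast at h1 ⊢
      rw [h1]
      have := Int.floor_le R
      linarith
    have : (T.ncard : ℝ) ≤ ((⌊R⌋ + 1).toNat : ℝ) + ((⌊R⌋ + 1).toNat : ℝ) := by
      rw [hcard]
      have : F.card ≤ (⌊R⌋ + 1).toNat + (⌊R⌋ + 1).toNat := by
        calc F.card ≤ _ := hc2
        _ ≤ _ := hc3
        _ = _ := by rw [hic1, hic2]
      exact_mod_cast this
    linarith

lemma triple_bound (α : ℝ) (hα₁ : 1 < α) (hα₂ : α < 2) (a : ℤ) (l r M₁ M₂ lam : ℝ)
    (hM₁ : 0 < M₁) (hM₂ : 0 < M₂)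
    (hlamle : lam ≤ α * (α - 1) * ((2 * M₁) ^ (α - 2) + (2 * M₂) ^ (α - 2)))
    (ε₁ ε₂ : ℝ) (hε₁ : ε₁ = 1 ∨ ε₁ = -1) (hε₂ : ε₂ = 1 ∨ ε₂ = -1)
    (x y z : ℤ) (hxy : x ≤ y) (hyz : y ≤ z)
    (hcond : ∀ w : ℤ, w = x ∨ w = y ∨ w = z →
      M₁ ≤ ε₁ * w ∧ ε₁ * w ≤ 2 * M₁ ∧ M₂ ≤ ε₂ * (a - w) ∧ ε₂ * (a - w) ≤ 2 * M₂ ∧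
      |(ε₁ * w) ^ α + (ε₂ * ((a : ℝ) - w)) ^ α - l| ≤ r) :
    lam * (((y - x : ℤ) : ℝ) * ((z - y : ℤ) : ℝ)) ≤ 4 * r := by
  obtain ⟨hx1, hx2, hx3, hx4, hx5⟩ := hcond x (Or.inl rfl)
  obtain ⟨hy1, hy2, hy3, hy4, hy5⟩ := hcond y (Or.inr (Or.inl rfl))
  obtain ⟨hz1, hz2, hz3, hz4, hz5⟩ := hcond z (Or.inr (Or.inr rfl))
  -- bounds for every real t in [x, z]
  have hb1 : ∀ t ∈ Set.Icc (x : ℝ) (z : ℝ), M₁ ≤ ε₁ * t ∧ ε₁ * t ≤ 2 * M₁ := by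
    intro t ht
    rcases hε₁ with h | h <;> subst h <;> constructor <;> linarith [ht.1, ht.2]
  have hb2 : ∀ t ∈ Set.Icc (x : ℝ) (z : ℝ), M₂ ≤ ε₂ * ((a : ℝ) - t) ∧
      ε₂ * ((a : ℝ) - t) ≤ 2 * M₂ := by
    intro t ht
    rcases hε₂ with h | h <;> subst h <;> constructor <;> linarith [ht.1, ht.2]
  have hεsq : ε₁ ^ 2 = 1 := by rcases hε₁ with h | h <;> rw [h] <;> norm_num
  have hεsq2 : ε₂ ^ 2 = 1 := by rcases hε₂ with h | h <;> rw [h] <;> norm_num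
  have hα0 : 0 < α * (α - 1) := mul_pos (by linarith) (by linarith)
  have hcv : ConvexOn ℝ (Set.Icc (x : ℝ) (z : ℝ))
      (fun t => (ε₁ * t + 0) ^ α + ((-ε₂) * t + ε₂ * a) ^ α - lam / 2 * t ^ 2) := by
    apply aux_conv α ε₁ 0 (-ε₂) (ε₂ * a) lam _ _ hα₁ hα₂
    · intro t ht
      have := (hb1 t ht).1
      linarith
    · intro t ht
      have := (hb2 t ht).1
      nlinarith
    · intro t ht
      have e1 : ε₁ * t + 0 = ε₁ * t := by ring
      have e2 : (-ε₂) * t + ε₂ * a = ε₂ * ((a : ℝ) - t) := by ring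
      rw [e1, e2, hεsq, neg_pow, hεsq2]
      have p1 : (2 * M₁) ^ (α - 2) ≤ (ε₁ * t) ^ (α - 2) := by
        apply Real.rpow_le_rpow_of_nonpos (by linarith [(hb1 t ht).1]) (hb1 t ht).2
        linarith
      have p2 : (2 * M₂) ^ (α - 2) ≤ (ε₂ * ((a : ℝ) - t)) ^ (α - 2) := by
        apply Real.rpow_le_rpow_of_nonpos (by linarith [(hb2 t ht).1]) (hb2 t ht).2
        linarith
      calc lam ≤ α * (α - 1) * ((2 * M₁) ^ (α - 2) + (2 * M₂) ^ (α - 2)) := hlamle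
        _ ≤ α * (α - 1) * (1 * (ε₁ * t) ^ (α - 2) + (-1) ^ 2 * (ε₂ * ((a:ℝ) - t)) ^ (α - 2)) := by
            rw [neg_one_sq]
            apply mul_le_mul_of_nonneg_left _ hα0.le
            linarith
        _ = _ := by ring_nf
  have hfun : (fun t : ℝ => (ε₁ * t + 0) ^ α + ((-ε₂) * t + ε₂ * a) ^ α - lam / 2 * t ^ 2)
      = (fun t : ℝ => (ε₁ * t) ^ α + (ε₂ * ((a : ℝ) - t)) ^ α - lam / 2 * t ^ 2) := by
    funext t
    have e1 : ε₁ * t + 0 = ε₁ * t := by ring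
    have e2 : (-ε₂) * t + ε₂ * a = ε₂ * ((a : ℝ) - t) := by ring
    rw [e1, e2]
  rw [hfun] at hcv
  have hxz : (x : ℝ) ≤ z := by exact_mod_cast hxy.trans hyz
  have h3 := three_point (fun t : ℝ => (ε₁ * t) ^ α + (ε₂ * ((a : ℝ) - t)) ^ α) lam
    (x : ℝ) (z : ℝ) (x : ℝ) (y : ℝ) (z : ℝ) l r hcv
    ⟨le_refl _, hxz⟩ ⟨hxz, le_refl _⟩ (by exact_mod_cast hxy) (by exact_mod_cast hyz)
    hx5 hy5 hz5
  push_cast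
  exact h3
lemma class_count (α : ℝ) (hα₁ : 1 < α) (hα₂ : α < 2) (a : ℤ) (l r M₁ M₂ lam R : ℝ)
    (hM₁ : 0 < M₁) (hM₂ : 0 < M₂) (hlam0 : 0 < lam)
    (hlamle : lam ≤ α * (α - 1) * ((2 * M₁) ^ (α - 2) + (2 * M₂) ^ (α - 2)))
    (hR0 : 0 ≤ R) (hRsq : lam * R ^ 2 = 4 * r)
    (ε₁ ε₂ : ℝ) (hε₁ : ε₁ = 1 ∨ ε₁ = -1) (hε₂ : ε₂ = 1 ∨ ε₂ = -1)
    (T : Set ℤ) (hfin : T.Finite)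
    (hT : ∀ k ∈ T, M₁ ≤ ε₁ * k ∧ ε₁ * k ≤ 2 * M₁ ∧ M₂ ≤ ε₂ * ((a : ℝ) - k) ∧
      ε₂ * ((a : ℝ) - k) ≤ 2 * M₂ ∧ |(ε₁ * k) ^ α + (ε₂ * ((a : ℝ) - k)) ^ α - l| ≤ r) :
    (T.ncard : ℝ) ≤ 2 * R + 2 := by
  apply countC T hfin R hR0
  intro x hx y hy z hz hxy hyz
  have h4 := triple_bound α hα₁ hα₂ a l r M₁ M₂ lam hM₁ hM₂ hlamle ε₁ ε₂ hε₁ hε₂ x y z hxy hyz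
    (by intro w hw; rcases hw with rfl | rfl | rfl; exacts [hT w hx, hT w hy, hT w hz])
  exact le_of_mul_le_mul_left (by linarith) hlam0
set_option maxHeartbeats 1600000 in
theorem stmt6 (α : ℝ) (hα₁ : 1 < α) (hα₂ : α < 2) :
    ∃ C > 0, ∀ a : ℤ, ∀ l r M₁ M₂ : ℝ, 1 / 100 ≤ r → 1 / 2 ≤ M₁ → 1 / 2 ≤ M₂ →
      (({k : ℤ | M₁ ≤ |(k : ℝ)| ∧ |(k : ℝ)| ≤ 2 * M₁ ∧
          M₂ ≤ |((a - k : ℤ) : ℝ)| ∧ |((a - k : ℤ) : ℝ)| ≤ 2 * M₂ ∧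
          |(|(k : ℝ)| ^ α + |((a - k : ℤ) : ℝ)| ^ α - l)| ≤ r}.ncard : ℝ)) ≤
        C * min M₁ M₂ ^ (1 - α / 2) * r ^ (1 / 2 : ℝ) := by
  have hα0 : 0 < α * (α - 1) := mul_pos (by linarith) (by linarith)
  set c₀ : ℝ := 2 ^ ((2 : ℝ) - α / 2) / Real.sqrt (α * (α - 1)) with hc₀def
  have hsq : 0 < Real.sqrt (α * (α - 1)) := Real.sqrt_pos.mpr hα0
  have hc₀ : 0 < c₀ := div_pos (Real.rpow_pos_of_pos two_pos _) hsq
  refine ⟨8 * c₀ + 160, by linarith, ?_⟩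
  intro a l r M₁ M₂ hr hM₁ hM₂
  have hM₁0 : 0 < M₁ := by linarith
  have hM₂0 : 0 < M₂ := by linarith
  have hr0 : 0 < r := by linarith
  set m : ℝ := min M₁ M₂ with hmdef
  have hm : 1 / 2 ≤ m := le_min hM₁ hM₂
  have hm0 : 0 < m := by linarith
  set lam : ℝ := α * (α - 1) * (2 * m) ^ (α - 2) with hlamdef
  have hlam0 : 0 < lam := mul_pos hα0 (Real.rpow_pos_of_pos (by linarith) _)
  set R : ℝ := c₀ * (r ^ (1 / 2 : ℝ) * m ^ (1 - α / 2)) with hRdef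
  have hR0 : 0 ≤ R :=
    (mul_pos hc₀ (mul_pos (Real.rpow_pos_of_pos hr0 _) (Real.rpow_pos_of_pos hm0 _))).le
  -- key algebraic identity : lam * R² = 4r
  have s1 : (r ^ (1 / 2 : ℝ)) ^ 2 = r := by
    rw [← Real.rpow_natCast (r ^ (1 / 2 : ℝ)) 2, ← Real.rpow_mul hr0.le]
    norm_num
  have s2 : (m ^ (1 - α / 2)) ^ 2 = m ^ (2 - α) := by
    rw [← Real.rpow_natCast (m ^ (1 - α / 2)) 2, ← Real.rpow_mul hm0.le]
    congr 1
    push_cast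
    ring
  have s3 : c₀ ^ 2 = 2 ^ ((4 : ℝ) - α) / (α * (α - 1)) := by
    rw [hc₀def, div_pow, Real.sq_sqrt hα0.le,
      ← Real.rpow_natCast ((2:ℝ) ^ ((2 : ℝ) - α / 2)) 2, ← Real.rpow_mul (by norm_num : (0:ℝ) ≤ 2)]
    congr 2
    push_cast
    ring
  have s4 : (2 * m) ^ (α - 2) = 2 ^ (α - 2) * m ^ (α - 2) :=
    Real.mul_rpow (by norm_num) hm0.le
  have s5 : (2 : ℝ) ^ (α - 2) * 2 ^ ((4 : ℝ) - α) = 4 := by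
    rw [← Real.rpow_add two_pos]
    have h : α - 2 + ((4 : ℝ) - α) = 2 := by ring
    rw [h]
    rw [show (2:ℝ) = ((2:ℕ):ℝ) by norm_num, Real.rpow_natCast]
    norm_num
  have s6 : m ^ (α - 2) * m ^ (2 - α) = 1 := by
    rw [← Real.rpow_add hm0]
    norm_num
  have hRsq : lam * R ^ 2 = 4 * r := by
    have e1 : lam * R ^ 2 = (α * (α - 1)) * ((2 * m) ^ (α - 2)) *
        (c₀ ^ 2 * ((r ^ (1 / 2 : ℝ)) ^ 2 * (m ^ (1 - α / 2)) ^ 2)) := by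
      rw [hlamdef, hRdef]; ring
    rw [e1, s1, s2, s3, s4]
    have e2 : α * (α - 1) * (2 ^ (α - 2) * m ^ (α - 2)) *
        (2 ^ ((4:ℝ) - α) / (α * (α - 1)) * (r * m ^ (2 - α)))
        = (2 ^ (α - 2) * 2 ^ ((4:ℝ) - α)) * (m ^ (α - 2) * m ^ (2 - α)) * r *
          ((α * (α - 1)) / (α * (α - 1))) := by ring
    rw [e2, s5, s6, div_self hα0.ne']
    ring
  have hlamle : lam ≤ α * (α - 1) * ((2 * M₁) ^ (α - 2) + (2 * M₂) ^ (α - 2)) := by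
    rw [hlamdef]
    apply mul_le_mul_of_nonneg_left _ hα0.le
    rcases le_total M₁ M₂ with h | h
    · rw [hmdef, min_eq_left h]
      exact le_add_of_nonneg_right (Real.rpow_nonneg (by linarith) _)
    · rw [hmdef, min_eq_right h]
      exact le_add_of_nonneg_left (Real.rpow_nonneg (by linarith) _)
  set S : Set ℤ := {k : ℤ | M₁ ≤ |(k : ℝ)| ∧ |(k : ℝ)| ≤ 2 * M₁ ∧
      M₂ ≤ |((a - k : ℤ) : ℝ)| ∧ |((a - k : ℤ) : ℝ)| ≤ 2 * M₂ ∧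
      |(|(k : ℝ)| ^ α + |((a - k : ℤ) : ℝ)| ^ α - l)| ≤ r} with hSdef
  -- finiteness
  have hSfin : S.Finite := by
    apply Set.Finite.subset (Set.finite_Icc (-⌈2 * M₁⌉) ⌈2 * M₁⌉)
    intro k hk
    rw [hSdef] at hk
    have h1 : |(k : ℝ)| ≤ 2 * M₁ := hk.2.1
    have h2 : ((|k| : ℤ) : ℝ) ≤ (⌈2 * M₁⌉ : ℝ) := by
      rw [Int.cast_abs]
      exact h1.trans (Int.le_ceil _)
    have h3 : |k| ≤ ⌈2 * M₁⌉ := by exact_mod_cast h2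
    exact Set.mem_Icc.mpr (abs_le.mp h3)
  -- every k in S has k ≠ 0 and k ≠ a
  have hk0 : ∀ k ∈ S, k ≠ 0 := by
    intro k hk hk'
    rw [hSdef] at hk
    rw [hk'] at hk
    simp at hk
    linarith [hk.1]
  have hka : ∀ k ∈ S, k ≠ a := by
    intro k hk hk'
    rw [hSdef] at hk
    rw [hk'] at hk
    simp at hk
    linarith [hk.2.2.1]
  -- the four sign classes
  set s₁ : Set ℤ := {k | k ∈ S ∧ 0 < k ∧ k < a} with hs₁
  set s₂ : Set ℤ := {k | k ∈ S ∧ 0 < k ∧ a < k} with hs₂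
  set s₃ : Set ℤ := {k | k ∈ S ∧ k < 0 ∧ k < a} with hs₃
  set s₄ : Set ℤ := {k | k ∈ S ∧ k < 0 ∧ a < k} with hs₄
  have hsub : S ⊆ s₁ ∪ s₂ ∪ s₃ ∪ s₄ := by
    intro k hk
    have h0 := hk0 k hk
    have ha := hka k hk
    rcases lt_trichotomy 0 k with h1 | h1 | h1 <;> rcases lt_trichotomy k a with h2 | h2 | h2
    · exact Or.inl (Or.inl (Or.inl ⟨hk, h1, h2⟩))
    · exact absurd h2 ha
    · exact Or.inl (Or.inl (Or.inr ⟨hk, h1, h2⟩))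
    · exact absurd h1.symm h0
    · exact absurd h2 ha
    · exact absurd h1.symm h0
    · exact Or.inl (Or.inr ⟨hk, h1, h2⟩)
    · exact absurd h2 ha
    · exact Or.inr ⟨hk, h1, h2⟩
  have hfin₁ : s₁.Finite := hSfin.subset fun k hk => hk.1
  have hfin₂ : s₂.Finite := hSfin.subset fun k hk => hk.1
  have hfin₃ : s₃.Finite := hSfin.subset fun k hk => hk.1
  have hfin₄ : s₄.Finite := hSfin.subset fun k hk => hk.1
  -- conditions per class
  have hSmem : ∀ k ∈ S, M₁ ≤ |(k : ℝ)| ∧ |(k : ℝ)| ≤ 2 * M₁ ∧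
      M₂ ≤ |((a - k : ℤ) : ℝ)| ∧ |((a - k : ℤ) : ℝ)| ≤ 2 * M₂ ∧
      |(|(k : ℝ)| ^ α + |((a - k : ℤ) : ℝ)| ^ α - l)| ≤ r := by
    intro k hk
    rwa [hSdef] at hk
  have habs : ∀ k : ℤ, |((a - k : ℤ) : ℝ)| = |(a : ℝ) - (k : ℝ)| := by
    intro k
    push_cast
    rfl
  have hcls : ∀ (ε₁ ε₂ : ℝ) (T : Set ℤ), (∀ k ∈ T, k ∈ S ∧ |(k : ℝ)| = ε₁ * k ∧
      |(a : ℝ) - (k : ℝ)| = ε₂ * ((a : ℝ) - k)) →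
      ∀ k ∈ T, M₁ ≤ ε₁ * k ∧ ε₁ * k ≤ 2 * M₁ ∧ M₂ ≤ ε₂ * ((a : ℝ) - k) ∧
        ε₂ * ((a : ℝ) - k) ≤ 2 * M₂ ∧ |(ε₁ * k) ^ α + (ε₂ * ((a : ℝ) - k)) ^ α - l| ≤ r := by
    intro ε₁ ε₂ T hT k hk
    obtain ⟨hkS, e1, e2⟩ := hT k hk
    have h := hSmem k hkS
    rw [habs k, e2] at h
    rw [e1] at h
    exact h
  have hone : (1 : ℝ) = 1 ∨ (1 : ℝ) = -1 := Or.inl rfl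
  have hmone : (-1 : ℝ) = 1 ∨ (-1 : ℝ) = -1 := Or.inr rfl
  have hb₁ : (s₁.ncard : ℝ) ≤ 2 * R + 2 := by
    apply class_count α hα₁ hα₂ a l r M₁ M₂ lam R hM₁0 hM₂0 hlam0 hlamle hR0 hRsq 1 1
      hone hone s₁ hfin₁
    apply hcls
    intro k hk
    obtain ⟨hkS, h1, h2⟩ := hk
    refine ⟨hkS, ?_, ?_⟩
    · rw [one_mul, abs_of_pos (by exact_mod_cast h1 : (0:ℝ) < (k:ℝ))]
    · rw [one_mul, abs_of_pos (by exact_mod_cast sub_pos.mpr h2 : (0:ℝ) < (a:ℝ) - (k:ℝ))]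
  have hb₂ : (s₂.ncard : ℝ) ≤ 2 * R + 2 := by
    apply class_count α hα₁ hα₂ a l r M₁ M₂ lam R hM₁0 hM₂0 hlam0 hlamle hR0 hRsq 1 (-1)
      hone hmone s₂ hfin₂
    apply hcls
    intro k hk
    obtain ⟨hkS, h1, h2⟩ := hk
    refine ⟨hkS, ?_, ?_⟩
    · rw [one_mul, abs_of_pos (by exact_mod_cast h1 : (0:ℝ) < (k:ℝ))]
    · rw [abs_of_neg (by exact_mod_cast sub_neg.mpr h2 : (a:ℝ) - (k:ℝ) < 0)]
      ring
  have hb₃ : (s₃.ncard : ℝ) ≤ 2 * R + 2 := by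
    apply class_count α hα₁ hα₂ a l r M₁ M₂ lam R hM₁0 hM₂0 hlam0 hlamle hR0 hRsq (-1) 1
      hmone hone s₃ hfin₃
    apply hcls
    intro k hk
    obtain ⟨hkS, h1, h2⟩ := hk
    refine ⟨hkS, ?_, ?_⟩
    · rw [abs_of_neg (by exact_mod_cast h1 : (k:ℝ) < 0)]
      ring
    · rw [one_mul, abs_of_pos (by exact_mod_cast sub_pos.mpr h2 : (0:ℝ) < (a:ℝ) - (k:ℝ))]
  have hb₄ : (s₄.ncard : ℝ) ≤ 2 * R + 2 := by
    apply class_count α hα₁ hα₂ a l r M₁ M₂ lam R hM₁0 hM₂0 hlam0 hlamle hR0 hRsq (-1) (-1)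
      hmone hmone s₄ hfin₄
    apply hcls
    intro k hk
    obtain ⟨hkS, h1, h2⟩ := hk
    refine ⟨hkS, ?_, ?_⟩
    · rw [abs_of_neg (by exact_mod_cast h1 : (k:ℝ) < 0)]
      ring
    · rw [abs_of_neg (by exact_mod_cast sub_neg.mpr h2 : (a:ℝ) - (k:ℝ) < 0)]
      ring
  -- total count
  have hcount : (S.ncard : ℝ) ≤ (s₁.ncard : ℝ) + s₂.ncard + s₃.ncard + s₄.ncard := by
    have h1 : S.ncard ≤ (s₁ ∪ s₂ ∪ s₃ ∪ s₄).ncard :=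
      Set.ncard_le_ncard hsub (((hfin₁.union hfin₂).union hfin₃).union hfin₄)
    have h2 : (s₁ ∪ s₂ ∪ s₃ ∪ s₄).ncard ≤ s₁.ncard + s₂.ncard + s₃.ncard + s₄.ncard := by
      calc (s₁ ∪ s₂ ∪ s₃ ∪ s₄).ncard ≤ (s₁ ∪ s₂ ∪ s₃).ncard + s₄.ncard :=
            Set.ncard_union_le _ _
        _ ≤ ((s₁ ∪ s₂).ncard + s₃.ncard) + s₄.ncard := by
            gcongr
            exact Set.ncard_union_le _ _
        _ ≤ ((s₁.ncard + s₂.ncard) + s₃.ncard) + s₄.ncard := by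
            gcongr
            exact Set.ncard_union_le _ _
    exact_mod_cast h1.trans h2
  -- final numeric bound
  have hm_e : (1 : ℝ) / 2 ≤ m ^ (1 - α / 2) := by
    have e0 : (0 : ℝ) ≤ 1 - α / 2 := by linarith
    have e1 : 1 - α / 2 ≤ 1 := by linarith
    calc (1 : ℝ) / 2 = ((1 : ℝ) / 2) ^ (1 : ℝ) := (Real.rpow_one _).symm
      _ ≤ ((1 : ℝ) / 2) ^ (1 - α / 2) :=
          Real.rpow_le_rpow_of_exponent_ge (by norm_num) (by norm_num) e1
      _ ≤ m ^ (1 - α / 2) := Real.rpow_le_rpow (by norm_num) hm e0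
  have hr_half : (1 : ℝ) / 10 ≤ r ^ (1 / 2 : ℝ) := by
    have h1 : ((1 : ℝ) / 100) ^ ((1 : ℝ) / 2) ≤ r ^ ((1 : ℝ) / 2) :=
      Real.rpow_le_rpow (by norm_num) hr (by norm_num)
    have h2 : ((1 : ℝ) / 100) ^ ((1 : ℝ) / 2) = 1 / 10 := by
      rw [show (1 : ℝ) / 100 = ((1 : ℝ) / 10) ^ (2 : ℕ) by norm_num,
        ← Real.rpow_natCast ((1 : ℝ) / 10) 2, ← Real.rpow_mul (by norm_num)]
      norm_num
    linarith
  have hprod : (1 : ℝ) / 2 * (1 / 10) ≤ m ^ (1 - α / 2) * r ^ (1 / 2 : ℝ) :=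
    mul_le_mul hm_e hr_half (by norm_num) (by linarith)
  calc (S.ncard : ℝ) ≤ (s₁.ncard : ℝ) + s₂.ncard + s₃.ncard + s₄.ncard := hcount
    _ ≤ 4 * (2 * R + 2) := by linarith
    _ = 8 * (c₀ * (r ^ (1 / 2 : ℝ) * m ^ (1 - α / 2))) + 8 := by rw [hRdef]; ring
    _ ≤ (8 * c₀ + 160) * m ^ (1 - α / 2) * r ^ (1 / 2 : ℝ) := by nlinarith [hprod, hc₀]
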